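/- Let k ≥ 1, let d₁, …, d_k ∈ ℤ and L₁, …, L_k be positive integers, and suppose that both G := {Σᵢ₌₁ᵏ aᵢdᵢ : aᵢ ∈ ℤ, |aᵢ| ≤ Lᵢ} and G'' := {Σᵢ₌₁ᵏ aᵢdᵢ : aᵢ ∈ ℤ, |aᵢ| ≤ 4Lᵢ} are proper generalized arithmetic progressions. Suppose d₁', …, d_k' ∈ ℤ satisfy: for every integer vector (a₁, …, a_k) with |aᵢ| ≤ 4Lᵢ for all i, if Σᵢ₌₁ᵏ aᵢdᵢ > 0 then Σᵢ₌₁ᵏ aᵢdᵢ' > 0. Then the map φ : G → ℤ defined by φ(Σᵢ₌₁ᵏ aᵢdᵢ) = Σᵢ₌₁ᵏ aᵢdᵢ' (for |aᵢ| ≤ Lᵢ) is well-defined and is an order-preserving Freiman 2-isomorphism. -/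

import Mathlib

/-- `φ` is an order-preserving Freiman 2-isomorphism on the finite set `A ⊆ ℤ`. -/
def IsOrderPresFreiman2Iso (A : Finset ℤ) (φ : ℤ → ℤ) : Prop :=
  (∀ a ∈ A, ∀ b ∈ A, (a < b ↔ φ a < φ b)) ∧
  (∀ a ∈ A, ∀ b ∈ A, ∀ c ∈ A, ∀ d ∈ A, (a + b = c + d ↔ φ a + φ b = φ c + φ d))

/-- The generalized arithmetic progression `{∑ aᵢdᵢ : |aᵢ| ≤ Lᵢ}`, as a finite set. -/
noncomputable def gap (k : ℕ) (d : Fin k → ℤ) (L : Fin k → ℕ) : Finset ℤ :=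
  (Fintype.piFinset (fun i => Finset.Icc (-(L i : ℤ)) (L i))).image
    (fun a => ∑ i, a i * d i)

/-- If both `G = {∑ aᵢdᵢ : |aᵢ| ≤ Lᵢ}` and `G'' = {∑ aᵢdᵢ : |aᵢ| ≤ 4Lᵢ}` are
proper, and `(d₁', …, d_k')` satisfies: whenever `|aᵢ| ≤ 4Lᵢ` for all `i` and
`∑ aᵢdᵢ > 0`, then `∑ aᵢdᵢ' > 0`; then `φ(∑ aᵢdᵢ) = ∑ aᵢdᵢ'` is well-defined on
`G` and is an order-preserving Freiman 2-isomorphism. -/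
theorem solution_gives_freiman_iso
    (k : ℕ) (hk : 1 ≤ k) (d : Fin k → ℤ) (L : Fin k → ℕ) (hL : ∀ i, 0 < L i)
    (hG : Set.InjOn (fun a : Fin k → ℤ => ∑ i, a i * d i)
      {a | ∀ i, |a i| ≤ (L i : ℤ)})
    (hG'' : Set.InjOn (fun a : Fin k → ℤ => ∑ i, a i * d i)
      {a | ∀ i, |a i| ≤ 4 * (L i : ℤ)})
    (d' : Fin k → ℤ)
    (hd' : ∀ a : Fin k → ℤ, (∀ i, |a i| ≤ 4 * (L i : ℤ)) →
      0 < ∑ i, a i * d i → 0 < ∑ i, a i * d' i) :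
    ∃ φ : ℤ → ℤ,
      (∀ a : Fin k → ℤ, (∀ i, |a i| ≤ (L i : ℤ)) →
        φ (∑ i, a i * d i) = ∑ i, a i * d' i) ∧
      IsOrderPresFreiman2Iso (gap k d L) φ := by
  classical
  have hneg : ∀ a : Fin k → ℤ, (∀ i, |a i| ≤ 4 * (L i : ℤ)) →
      ∑ i, a i * d i < 0 → ∑ i, a i * d' i < 0 := by
    intro a ha h
    have ha' : ∀ i, |(-a) i| ≤ 4 * (L i : ℤ) := by
      intro i; simpa using ha i
    have hsum : ∑ i, (-a) i * d i = -∑ i, a i * d i := by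
      simp [neg_mul]
    have := hd' (-a) ha' (by rw [hsum]; linarith)
    have hsum' : ∑ i, (-a) i * d' i = -∑ i, a i * d' i := by
      simp [neg_mul]
    rw [hsum'] at this; linarith
  have hzero : ∀ a : Fin k → ℤ, (∀ i, |a i| ≤ 4 * (L i : ℤ)) →
      ∑ i, a i * d i = 0 → ∑ i, a i * d' i = 0 := by
    intro a ha h
    have h0 : (0 : Fin k → ℤ) ∈ {a : Fin k → ℤ | ∀ i, |a i| ≤ 4 * (L i : ℤ)} := by
      intro i
      simp only [Pi.zero_apply, abs_zero]
      positivity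
    have : a = 0 := hG'' ha h0 (by simpa using h)
    simp [this]
  have hiff : ∀ a : Fin k → ℤ, (∀ i, |a i| ≤ 4 * (L i : ℤ)) →
      (0 < ∑ i, a i * d i ↔ 0 < ∑ i, a i * d' i) := by
    intro a ha
    constructor
    · exact hd' a ha
    · intro h
      rcases lt_trichotomy (∑ i, a i * d i) 0 with h1 | h1 | h1
      · have := hneg a ha h1; linarith
      · have := hzero a ha h1; linarith
      · exact h1
  have heqz : ∀ a : Fin k → ℤ, (∀ i, |a i| ≤ 4 * (L i : ℤ)) →
      ((∑ i, a i * d i = 0) ↔ (∑ i, a i * d' i = 0)) := by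
    intro a ha
    constructor
    · exact hzero a ha
    · intro h
      rcases lt_trichotomy (∑ i, a i * d i) 0 with h1 | h1 | h1
      · have := hneg a ha h1; linarith
      · exact h1
      · have := hd' a ha h1; linarith
  set P : ℤ → Prop := fun x => ∃ a : Fin k → ℤ,
      (∀ i, |a i| ≤ (L i : ℤ)) ∧ ∑ i, a i * d i = x with hPdef
  set φ : ℤ → ℤ := fun x => if h : P x then ∑ i, h.choose i * d' i else 0 with hφdef
  have hwd : ∀ a : Fin k → ℤ, (∀ i, |a i| ≤ (L i : ℤ)) →
      φ (∑ i, a i * d i) = ∑ i, a i * d' i := by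
    intro a ha
    have hx : P (∑ i, a i * d i) := ⟨a, ha, rfl⟩
    rw [hφdef]
    simp only [dif_pos hx]
    have hs := hx.choose_spec
    have : hx.choose = a := hG hs.1 ha hs.2
    rw [this]
  have hmem : ∀ x ∈ gap k d L, ∃ a : Fin k → ℤ,
      (∀ i, |a i| ≤ (L i : ℤ)) ∧ ∑ i, a i * d i = x := by
    intro x hx
    rw [gap, Finset.mem_image] at hx
    obtain ⟨a, ha, rfl⟩ := hx
    refine ⟨a, fun i => ?_, rfl⟩
    have := Fintype.mem_piFinset.mp ha i
    rw [Finset.mem_Icc] at this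
    rw [abs_le]; exact this
  refine ⟨φ, hwd, ?_, ?_⟩
  · -- order preserving
    intro x hx y hy
    obtain ⟨u, hu, rfl⟩ := hmem x hx
    obtain ⟨v, hv, rfl⟩ := hmem y hy
    rw [hwd u hu, hwd v hv]
    have hb : ∀ i, |(v - u) i| ≤ 4 * (L i : ℤ) := by
      intro i
      have h1 := abs_le.mp (hu i)
      have h2 := abs_le.mp (hv i)
      rw [Pi.sub_apply, abs_le]
      constructor <;> linarith
    have h1 : ∑ i, (v - u) i * d i = ∑ i, v i * d i - ∑ i, u i * d i := by
      simp [sub_mul, Finset.sum_sub_distrib]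
    have h2 : ∑ i, (v - u) i * d' i = ∑ i, v i * d' i - ∑ i, u i * d' i := by
      simp [sub_mul, Finset.sum_sub_distrib]
    have hkey := hiff (v - u) hb
    rw [h1, h2] at hkey
    constructor
    · intro hlt; have := hkey.mp (by linarith); linarith
    · intro hlt; have := hkey.mpr (by linarith); linarith
  · -- Freiman
    intro x hx y hy z hz w hw
    obtain ⟨u, hu, rfl⟩ := hmem x hx
    obtain ⟨v, hv, rfl⟩ := hmem y hy
    obtain ⟨p, hp, rfl⟩ := hmem z hz
    obtain ⟨q, hq, rfl⟩ := hmem w hw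
    rw [hwd u hu, hwd v hv, hwd p hp, hwd q hq]
    have hb : ∀ i, |(u + v - p - q) i| ≤ 4 * (L i : ℤ) := by
      intro i
      have h1 := abs_le.mp (hu i)
      have h2 := abs_le.mp (hv i)
      have h3 := abs_le.mp (hp i)
      have h4 := abs_le.mp (hq i)
      simp only [Pi.sub_apply, Pi.add_apply, abs_le]
      constructor <;> linarith
    have h1 : ∑ i, (u + v - p - q) i * d i
        = ∑ i, u i * d i + ∑ i, v i * d i - ∑ i, p i * d i - ∑ i, q i * d i := by
      simp [add_mul, sub_mul, Finset.sum_sub_distrib, Finset.sum_add_distrib]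
    have h2 : ∑ i, (u + v - p - q) i * d' i
        = ∑ i, u i * d' i + ∑ i, v i * d' i - ∑ i, p i * d' i - ∑ i, q i * d' i := by
      simp [add_mul, sub_mul, Finset.sum_sub_distrib, Finset.sum_add_distrib]
    have hkey := heqz (u + v - p - q) hb
    rw [h1, h2] at hkey
    constructor
    · intro he; have := hkey.mp (by linarith); linarith
    · intro he; have := hkey.mpr (by linarith); linarith
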